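/- In the ring ℚ⟨x,y⟩[[T]], the harmonic-product inverse of (1-yT)^{-1} = Σ_{n≥0}yⁿTⁿ is 1 - yT(1+zT)^{-1}, where z = x+y; that is, (1-yT)^{-1} * (1 - yT(1+zT)^{-1}) = 1. -/

import Mathlib

open scoped BigOperators

abbrev Ltr := Fin 2

/-- `𝔥 = ℚ⟨x,y⟩`, realized as the monoid algebra of the free monoid on two letters. -/
abbrev H := MonoidAlgebra ℚ (FreeMonoid Ltr)

/-- The word `u₁⋯u_m` as an element of `𝔥`. -/
noncomputable def wrd (l : List Ltr) : H := MonoidAlgebra.of ℚ (FreeMonoid Ltr) (FreeMonoid.ofList l)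

/-- The generator `x`. -/
noncomputable def Xh : H := wrd [0]
/-- The generator `y`. -/
noncomputable def Yh : H := wrd [1]

/-- Letter produced when stuffling letters `u, v`: `y` iff both are `y`, else `x`. -/
noncomputable def ellt (a b : Ltr) : H := if a = 1 ∧ b = 1 then Yh else Xh
def cc1 (a b : Ltr) : ℚ := if a = 1 ∧ b = 0 then -1 else 1
def cc2 (a b : Ltr) : ℚ := if a = 0 ∧ b = 1 then -1 else 1
def cc3 (a b : Ltr) : ℚ := if a = 0 ∧ b = 0 then -1 else 1

/-- The harmonic (stuffle) product on words of `𝔥`: on `𝔥¹` it is Hoffman's harmonic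
product defined by `w*1 = 1*w = w` and
`z_k w₁ * z_l w₂ = z_k(w₁ * z_l w₂) + z_l(z_k w₁ * w₂) + z_{k+l}(w₁ * w₂)` with
`z_n = yx^{n-1}`, extended to all of `𝔥` (compatibly, via `w₁e₁ ⊛̃ w₂e₁ = (w₁*w₂)e₁`). -/
noncomputable def starW : List Ltr → List Ltr → H
  | [], v => wrd v
  | u, [] => wrd u
  | a :: u, b :: v =>
      cc1 a b • (ellt a b * starW u (b :: v)) + cc2 a b • (ellt a b * starW (a :: u) v)
      + cc3 a b • (ellt a b * Xh * starW u v)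
termination_by u v => u.length + v.length

/-- The harmonic product `*` on `𝔥`, extended bilinearly. -/
noncomputable def star (f g : H) : H :=
  f.coeff.sum fun u cu => g.coeff.sum fun v cv => (cu * cv) • starW u.toList v.toList

abbrev PS := PowerSeries H

/-- The harmonic product `*` extended coefficientwise to `𝔥[[T]]` (resp. `𝔥[[A]]`). -/
noncomputable def starPS (f g : PS) : PS :=
  PowerSeries.mk fun n =>
    ∑ p ∈ Finset.HasAntidiagonal.antidiagonal n,
      star (PowerSeries.coeff p.1 f) (PowerSeries.coeff p.2 g)

/-- Membership in `𝔥¹ = ℚ ⊕ y𝔥`: every word of the support is empty or starts with `y`. -/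
def inH1 (f : H) : Prop :=
  ∀ l ∈ f.coeff.support, FreeMonoid.toList l = [] ∨ (FreeMonoid.toList l).head? = some 1


-- ===================== auxiliary development =====================

section Aux

open Finsupp

local notation "M" => FreeMonoid Ltr

lemma wrd_eq_single (l : List Ltr) : wrd l = MonoidAlgebra.single (FreeMonoid.ofList l) (1:ℚ) := rfl

-- basic bilinearity of star
lemma star_zero_left (g : H) : star 0 g = 0 := by unfold _root_.star; exact Finsupp.sum_zero_index

lemma star_zero_right (f : H) : star f 0 = 0 := by
  unfold _root_.star
  simp [Finsupp.sum_zero_index]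

lemma star_add_left (f₁ f₂ g : H) : star (f₁ + f₂) g = star f₁ g + star f₂ g := by
  unfold _root_.star
  rw [MonoidAlgebra.coeff_add]
  apply Finsupp.sum_add_index' <;> intro u
  · simp
  · intro c₁ c₂
    rw [← Finsupp.sum_add]
    apply Finsupp.sum_congr; intro v _; rw [add_mul, add_smul]

lemma star_add_right (f g₁ g₂ : H) : star f (g₁ + g₂) = star f g₁ + star f g₂ := by
  unfold _root_.star
  rw [← Finsupp.sum_add]
  apply Finsupp.sum_congr; intro u _
  rw [MonoidAlgebra.coeff_add]
  apply Finsupp.sum_add_index' <;> intro v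
  · simp
  · intro c₁ c₂; rw [mul_add, add_smul]

lemma star_smul_left (c : ℚ) (f g : H) : star (c • f) g = c • star f g := by
  unfold _root_.star
  rw [MonoidAlgebra.coeff_smul, Finsupp.sum_smul_index (by simp), Finsupp.smul_sum]
  apply Finsupp.sum_congr; intro u _
  rw [Finsupp.smul_sum]
  apply Finsupp.sum_congr; intro v _
  rw [smul_smul, mul_assoc]

lemma star_smul_right (c : ℚ) (f g : H) : star f (c • g) = c • star f g := by
  unfold _root_.star
  rw [Finsupp.smul_sum]
  apply Finsupp.sum_congr; intro u _
  rw [MonoidAlgebra.coeff_smul, Finsupp.sum_smul_index (by simp), Finsupp.smul_sum]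
  apply Finsupp.sum_congr; intro v _
  rw [smul_smul]; congr 1; ring

lemma star_single_single (u v : M) (c d : ℚ) :
    star (MonoidAlgebra.single u c) (MonoidAlgebra.single v d)
      = (c*d) • starW u.toList v.toList := by
  unfold _root_.star
  rw [MonoidAlgebra.coeff_single, MonoidAlgebra.coeff_single,
    Finsupp.sum_single_index (by simp), Finsupp.sum_single_index (by simp)]

-- starW equations
lemma starW_nil_left (v : List Ltr) : starW [] v = wrd v := by rw [starW]

lemma starW_nil_right (u : List Ltr) : starW u [] = wrd u := by
  cases u
  · rw [starW]
  · rw [starW]; simp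

lemma starW_yy (u v : List Ltr) : starW ((1:Ltr)::u) ((1:Ltr)::v)
    = Yh * starW u (1::v) + Yh * starW (1::u) v + Yh * Xh * starW u v := by
  rw [starW]
  simp [cc1, cc2, cc3, ellt, mul_assoc]

lemma starW_yx (u v : List Ltr) : starW ((1:Ltr)::u) ((0:Ltr)::v)
    = -(Xh * starW u (0::v)) + Xh * starW (1::u) v + Xh * Xh * starW u v := by
  rw [starW]
  simp [cc1, cc2, cc3, ellt]

-- star with 1
lemma star_one_left (g : H) : star 1 g = g := by
  rw [MonoidAlgebra.one_def]
  unfold _root_.star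
  rw [MonoidAlgebra.coeff_single, Finsupp.sum_single_index (by simp)]
  have : ∀ v : M, ∀ d : ℚ, ((1:ℚ) * d) • starW (FreeMonoid.toList (1 : M)) v.toList
      = MonoidAlgebra.single v d := by
    intro v d
    rw [one_mul, FreeMonoid.toList_one, starW_nil_left, wrd_eq_single,
      FreeMonoid.ofList_toList]
    simp [Finsupp.smul_single]
  rw [Finsupp.sum_congr (fun v _ => this v (g.coeff v))]
  exact MonoidAlgebra.sum_coeff_single g

lemma star_one_right (f : H) : star f 1 = f := by
  rw [MonoidAlgebra.one_def]
  unfold _root_.star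
  have : ∀ u : M, ∀ c : ℚ,
      (Finsupp.sum (MonoidAlgebra.single (1:M) (1:ℚ)).coeff fun v cv =>
        (c * cv) • starW u.toList v.toList) = MonoidAlgebra.single u c := by
    intro u c
    rw [MonoidAlgebra.coeff_single, Finsupp.sum_single_index (by simp), mul_one, FreeMonoid.toList_one,
      starW_nil_right, wrd_eq_single, FreeMonoid.ofList_toList]
    simp [Finsupp.smul_single]
  rw [Finsupp.sum_congr (fun u _ => this u (f.coeff u))]
  exact MonoidAlgebra.sum_coeff_single f

lemma Yh_mul_single (a : M) (c : ℚ) :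
    Yh * MonoidAlgebra.single a c = MonoidAlgebra.single (FreeMonoid.ofList ((1:Ltr) :: a.toList)) c := by
  rw [Yh, wrd_eq_single, MonoidAlgebra.single_mul_single, one_mul,
    FreeMonoid.ofList_cons ((1:Ltr)) (FreeMonoid.toList a), FreeMonoid.ofList_toList,
    FreeMonoid.ofList_singleton]

lemma Xh_mul_single (a : M) (c : ℚ) :
    Xh * MonoidAlgebra.single a c = MonoidAlgebra.single (FreeMonoid.ofList ((0:Ltr) :: a.toList)) c := by
  rw [Xh, wrd_eq_single, MonoidAlgebra.single_mul_single, one_mul,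
    FreeMonoid.ofList_cons ((0:Ltr)) (FreeMonoid.toList a), FreeMonoid.ofList_toList,
    FreeMonoid.ofList_singleton]

lemma Hinduction {p : H → Prop} (f : H) (h0 : p 0)
    (hadd : ∀ f g : H, p f → p g → p (f + g))
    (hsingle : ∀ (a : M) (c : ℚ), p (MonoidAlgebra.single a c)) : p f :=
  MonoidAlgebra.induction_linear f h0 hadd hsingle

-- structural lemma L2
lemma star_y_y (f g : H) :
    star (Yh * f) (Yh * g)
      = Yh * star f (Yh * g) + Yh * star (Yh * f) g + Yh * Xh * star f g := by
  induction f using Hinduction with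
  | h0 => simp [star_zero_left, star_zero_right]
  | hadd f₁ f₂ h₁ h₂ =>
      simp only [mul_add, star_add_left, star_add_right, h₁, h₂]
      abel
  | hsingle a c =>
    induction g using Hinduction with
    | h0 => simp [star_zero_left, star_zero_right]
    | hadd g₁ g₂ h₁ h₂ =>
        simp only [mul_add, star_add_left, star_add_right, h₁, h₂]
        abel
    | hsingle b d =>
        rw [Yh_mul_single, Yh_mul_single, star_single_single, star_single_single,
          star_single_single, star_single_single,
          FreeMonoid.toList_ofList, FreeMonoid.toList_ofList]
        rw [starW_yy, smul_add, smul_add, mul_smul_comm, mul_smul_comm, mul_smul_comm]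

lemma star_y_x (f g : H) :
    star (Yh * f) (Xh * g)
      = -(Xh * star f (Xh * g)) + Xh * star (Yh * f) g + Xh * Xh * star f g := by
  induction f using Hinduction with
  | h0 => simp [star_zero_left, star_zero_right]
  | hadd f₁ f₂ h₁ h₂ =>
      simp only [mul_add, star_add_left, star_add_right, h₁, h₂]
      abel
  | hsingle a c =>
    induction g using Hinduction with
    | h0 => simp [star_zero_left, star_zero_right]
    | hadd g₁ g₂ h₁ h₂ =>
        simp only [mul_add, star_add_left, star_add_right, h₁, h₂]
        abel
    | hsingle b d =>
        rw [Yh_mul_single, Xh_mul_single, star_single_single, star_single_single,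
          star_single_single, star_single_single,
          FreeMonoid.toList_ofList, FreeMonoid.toList_ofList]
        rw [starW_yx, smul_add, smul_add, mul_smul_comm, mul_smul_comm, mul_smul_comm,
          smul_neg]

-- the three families
noncomputable def Zh : H := Xh + Yh
noncomputable def Cf (p q : ℕ) : H := star (Yh^p) (Yh * Zh^q)
noncomputable def Df (p q : ℕ) : H := star (Yh^p) (Zh^q)
noncomputable def Ef (p q : ℕ) : H := star (Yh^p) (Xh * Zh^q)

lemma Cf_zero (q : ℕ) : Cf 0 q = Yh * Zh^q := by
  simp [Cf, star_one_left]
lemma Df_zero_left (q : ℕ) : Df 0 q = Zh^q := by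
  simp [Df, star_one_left]
lemma Ef_zero (q : ℕ) : Ef 0 q = Xh * Zh^q := by
  simp [Ef, star_one_left]
lemma Df_zero_right (p : ℕ) : Df p 0 = Yh^p := by
  simp [Df, star_one_right]

lemma Cf_rec (p q : ℕ) :
    Cf (p+1) q = Yh * Cf p q + Yh * Df (p+1) q + Yh * Xh * Df p q := by
  have h := star_y_y (Yh^p) (Zh^q)
  rw [Cf, Df, Df, Cf, pow_succ']
  exact h

lemma Ef_rec (p q : ℕ) :
    Ef (p+1) q = -(Xh * Ef p q) + Xh * Df (p+1) q + Xh * Xh * Df p q := by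
  have h := star_y_x (Yh^p) (Zh^q)
  rw [Ef, Df, Df, Ef, pow_succ']
  exact h

lemma Df_rec (p q : ℕ) : Df p (q+1) = Ef p q + Cf p q := by
  rw [Df, Ef, Cf, pow_succ', Zh, add_mul, star_add_right]

-- alternating sums
noncomputable def Sc (n : ℕ) : H := ∑ q ∈ Finset.range n, ((-1:ℚ)^q) • Cf (n-1-q) q
noncomputable def Sd (n : ℕ) : H := ∑ q ∈ Finset.range (n+1), ((-1:ℚ)^q) • Df (n-q) q
noncomputable def Se (n : ℕ) : H := ∑ q ∈ Finset.range n, ((-1:ℚ)^q) • Ef (n-1-q) q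

lemma Sc_succ_eq (n : ℕ) : Sc (n+1) = ∑ q ∈ Finset.range (n+1), ((-1:ℚ)^q) • Cf (n-q) q := by
  rw [Sc]
  apply Finset.sum_congr rfl
  intro q _
  have h : n+1-1-q = n-q := by omega
  rw [h]

lemma Se_succ_eq (n : ℕ) : Se (n+1) = ∑ q ∈ Finset.range (n+1), ((-1:ℚ)^q) • Ef (n-q) q := by
  rw [Se]
  apply Finset.sum_congr rfl
  intro q _
  have h : n+1-1-q = n-q := by omega
  rw [h]

lemma Sd_split (n : ℕ) :
    (∑ q ∈ Finset.range (n+1), ((-1:ℚ)^q) • Df (n+1-q) q)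
      = Sd (n+1) - ((-1:ℚ)^(n+1)) • Df 0 (n+1) := by
  refine eq_sub_of_add_eq ?_
  rw [Sd]
  conv_rhs => rw [Finset.sum_range_succ]
  rw [Nat.sub_self]

lemma Sd_rec (n : ℕ) : Sd (n+1) = Yh^(n+1) - Se (n+1) - Sc (n+1) := by
  rw [Sd, Finset.sum_range_succ' _ (n+1), Se_succ_eq, Sc_succ_eq]
  have h1 : ∀ i ∈ Finset.range (n+1),
      ((-1:ℚ)^(i+1)) • Df (n+1-(i+1)) (i+1)
        = -(((-1:ℚ)^i) • Ef (n-i) i) + -(((-1:ℚ)^i) • Cf (n-i) i) := by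
    intro i _
    have h : n+1-(i+1) = n-i := by omega
    rw [h, Df_rec, pow_succ, mul_comm ((-1:ℚ)^i), neg_one_mul, neg_smul, smul_add,
      neg_add]
  rw [Finset.sum_congr rfl h1, Finset.sum_add_distrib, Finset.sum_neg_distrib,
    Finset.sum_neg_distrib]
  simp only [pow_zero, one_smul, Nat.sub_zero, Df_zero_right]
  abel

lemma Sc_rec (n : ℕ) :
    Sc (n+2) = Yh * Sc (n+1) + Yh * Sd (n+1) + Yh * Xh * Sd n := by
  rw [Sc, Finset.sum_range_succ]
  have he : n + 2 - 1 - (n+1) = 0 := by omega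
  rw [he]
  have h1 : ∀ q ∈ Finset.range (n+1),
      ((-1:ℚ)^q) • Cf (n+2-1-q) q
        = Yh * (((-1:ℚ)^q) • Cf (n-q) q) + Yh * (((-1:ℚ)^q) • Df (n+1-q) q)
          + Yh * Xh * (((-1:ℚ)^q) • Df (n-q) q) := by
    intro q hq
    rw [Finset.mem_range] at hq
    have h2 : n + 2 - 1 - q = (n - q) + 1 := by omega
    rw [h2, Cf_rec]
    have h3 : n - q + 1 = n + 1 - q := by omega
    rw [h3, smul_add, smul_add, mul_smul_comm, mul_smul_comm, mul_smul_comm]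
  rw [Finset.sum_congr rfl h1]
  rw [Finset.sum_add_distrib, Finset.sum_add_distrib, ← Finset.mul_sum, ← Finset.mul_sum,
    ← Finset.mul_sum]
  rw [← Sc_succ_eq, Sd_split]
  have hsd2 : ∑ q ∈ Finset.range (n+1), ((-1:ℚ)^q) • Df (n-q) q = Sd n := rfl
  rw [hsd2, Cf_zero, Df_zero_left, mul_sub, mul_smul_comm]
  abel

lemma Se_rec (n : ℕ) :
    Se (n+2) = -(Xh * Se (n+1)) + Xh * Sd (n+1) + Xh * Xh * Sd n := by
  rw [Se, Finset.sum_range_succ]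
  have he : n + 2 - 1 - (n+1) = 0 := by omega
  rw [he]
  have h1 : ∀ q ∈ Finset.range (n+1),
      ((-1:ℚ)^q) • Ef (n+2-1-q) q
        = -(Xh * (((-1:ℚ)^q) • Ef (n-q) q)) + Xh * (((-1:ℚ)^q) • Df (n+1-q) q)
          + Xh * Xh * (((-1:ℚ)^q) • Df (n-q) q) := by
    intro q hq
    rw [Finset.mem_range] at hq
    have h2 : n + 2 - 1 - q = (n - q) + 1 := by omega
    rw [h2, Ef_rec]
    have h3 : n - q + 1 = n + 1 - q := by omega
    rw [h3, smul_add, smul_add, mul_smul_comm, mul_smul_comm, mul_smul_comm, smul_neg]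
  rw [Finset.sum_congr rfl h1]
  rw [Finset.sum_add_distrib, Finset.sum_add_distrib, Finset.sum_neg_distrib,
    ← Finset.mul_sum, ← Finset.mul_sum, ← Finset.mul_sum]
  rw [← Se_succ_eq, Sd_split]
  have hsd2 : ∑ q ∈ Finset.range (n+1), ((-1:ℚ)^q) • Df (n-q) q = Sd n := rfl
  rw [hsd2, Ef_zero, Df_zero_left, mul_sub, mul_smul_comm]
  abel

lemma Sc_one : Sc 1 = Yh := by
  rw [Sc]
  simp [Cf_zero]
lemma Se_one : Se 1 = Xh := by
  rw [Se]
  simp [Ef_zero]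
lemma Sd_zero : Sd 0 = 1 := by
  rw [Sd]
  simp [Df_zero_right]

lemma main_ind (n : ℕ) :
    Sd n = (-Xh)^n ∧ Sc (n+1) = Yh^(n+1) ∧ Se (n+1) = -((-Xh)^(n+1))
      ∧ Sd (n+1) = (-Xh)^(n+1) := by
  induction n with
  | zero =>
      refine ⟨by rw [Sd_zero, pow_zero], by rw [Sc_one, pow_one],
        by rw [Se_one, pow_one, neg_neg], ?_⟩
      rw [Sd_rec 0, Sc_one, Se_one, pow_one, pow_one]
      abel
  | succ n ih =>
      obtain ⟨hd0, hc, he, hd⟩ := ih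
      have key : Yh * Xh * (-Xh)^n = -(Yh * (-Xh)^(n+1)) := by
        simp only [pow_succ', neg_mul, mul_neg, neg_neg, mul_assoc]
      have k1 : Xh * (-Xh)^(n+1) = -((-Xh)^(n+2)) := by
        rw [pow_succ' (-Xh) (n+1), neg_mul, neg_neg]
      have k2 : Xh * Xh * (-Xh)^n = (-Xh)^(n+2) := by
        simp only [pow_succ', neg_mul, mul_neg, neg_neg, mul_assoc]
      have hc2 : Sc (n+2) = Yh^(n+2) := by
        rw [Sc_rec, hc, hd, hd0, key, ← pow_succ' Yh (n+1)]
        abel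
      have he2 : Se (n+2) = -((-Xh)^(n+2)) := by
        rw [Se_rec, he, hd, hd0, mul_neg, neg_neg, k1, k2]
        abel
      have hd2 : Sd (n+2) = (-Xh)^(n+2) := by
        rw [Sd_rec, hc2, he2]
        abel
      exact ⟨hd, hc2, he2, hd2⟩

lemma Sc_eq (n : ℕ) : Sc (n+1) = Yh^(n+1) := (main_ind n).2.1

end Aux

/-- In `ℚ⟨x,y⟩[[T]]`, the harmonic inverse of
`(1-yT)⁻¹ = Σ_n yⁿTⁿ` is `1 - yT(1+zT)⁻¹` with `z = x+y`:
`(1-yT)⁻¹ * (1 - yT(1+zT)⁻¹) = 1`. -/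
theorem stmt14 :
    starPS (PowerSeries.mk fun n => (Yh ^ n : H))
      (PowerSeries.mk fun n =>
        if n = 0 then (1 : H) else ((-1 : ℚ) ^ n) • (Yh * (Xh + Yh) ^ (n - 1))) = 1 := by
  ext n
  rw [starPS, PowerSeries.coeff_mk,
    Finset.Nat.sum_antidiagonal_eq_sum_range_succ (fun a b =>
      star (PowerSeries.coeff a (PowerSeries.mk fun k => (Yh ^ k : H)))
        (PowerSeries.coeff b (PowerSeries.mk fun k =>
          if k = 0 then (1 : H) else ((-1 : ℚ) ^ k) • (Yh * (Xh + Yh) ^ (k - 1)))))]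
  simp only [PowerSeries.coeff_mk, PowerSeries.coeff_one]
  cases n with
  | zero =>
      simp [star_one_right]
  | succ m =>
      rw [← Finset.sum_range_reflect]
      have h1 : ∀ q ∈ Finset.range (m+1+1),
          _root_.star (Yh ^ (m + 1 + 1 - 1 - q))
            (if m + 1 - (m + 1 + 1 - 1 - q) = 0 then (1:H)
             else ((-1:ℚ) ^ (m + 1 - (m + 1 + 1 - 1 - q))) •
               (Yh * (Xh + Yh) ^ (m + 1 - (m + 1 + 1 - 1 - q) - 1)))
          = _root_.star (Yh ^ (m + 1 - q))
              (if q = 0 then (1:H) else ((-1:ℚ)^q) • (Yh * Zh ^ (q-1))) := by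
        intro q hq
        rw [Finset.mem_range] at hq
        have e1 : m + 1 + 1 - 1 - q = m + 1 - q := by omega
        have e2 : m + 1 - (m + 1 - q) = q := by omega
        rw [e1, e2, Zh]
      rw [Finset.sum_congr rfl h1, Finset.sum_range_succ' _ (m+1)]
      have h2 : ∀ i ∈ Finset.range (m+1),
          _root_.star (Yh ^ (m + 1 - (i+1)))
              (if i+1 = 0 then (1:H) else ((-1:ℚ)^(i+1)) • (Yh * Zh ^ (i+1-1)))
            = -(((-1:ℚ)^i) • Cf (m+1-1-i) i) := by
        intro i hi
        rw [Finset.mem_range] at hi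
        rw [if_neg (Nat.succ_ne_zero i), star_smul_right, Nat.add_sub_cancel]
        have e : m + 1 - (i+1) = m + 1 - 1 - i := by omega
        rw [e, pow_succ, mul_comm ((-1:ℚ)^i), neg_one_mul, neg_smul]
        rfl
      rw [Finset.sum_congr rfl h2, Finset.sum_neg_distrib]
      rw [Nat.sub_zero, if_pos rfl, star_one_right]
      have hsc : (∑ i ∈ Finset.range (m+1), ((-1:ℚ)^i) • Cf (m+1-1-i) i) = Sc (m+1) := rfl
      rw [hsc, Sc_eq]
      simp
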